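/- Let A, B, C be nonempty finite types, let ρ be a PSD matrix indexed by A × B × C, let σ be a PSD matrix indexed by B × C, and let λ ≥ 0. If λ·(id_A ⊗ σ) − ρ is PSD, then λ·(id_A ⊗ σ_B) − ρ_{AB} is PSD, where σ_B and ρ_{AB} denote the partial traces of σ and ρ over C. (Strong subadditivity of the min-entropy: H_min(ρ_{ABC}|σ_{BC}) ≤ H_min(ρ_{AB}|σ_B).) -/

import Mathlib

open Matrix Kronecker
open scoped ComplexOrder

lemma psd_sum {n : Type*} [Fintype n] {ι : Type*} (s : Finset ι)
    (f : ι → Matrix n n ℂ) (hf : ∀ i ∈ s, (f i).PosSemidef) :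
    (∑ i ∈ s, f i).PosSemidef := by
  classical
  induction s using Finset.induction_on with
  | empty => simpa using Matrix.PosSemidef.zero
  | insert _ _ hx ih =>
    rw [Finset.sum_insert hx]
    exact (hf _ (Finset.mem_insert_self _ _)).add
      (ih fun i hi => hf i (Finset.mem_insert_of_mem hi))

lemma ptrace_psd {A B C : Type*} [Fintype A] [Fintype B] [Fintype C]
    [DecidableEq A] [DecidableEq B] [DecidableEq C]
    (M : Matrix (A × B × C) (A × B × C) ℂ) (hM : M.PosSemidef) :
    (Matrix.of fun p q : A × B => ∑ c : C, M (p.1, p.2, c) (q.1, q.2, c)).PosSemidef := by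
  have key : (Matrix.of fun p q : A × B => ∑ c : C, M (p.1, p.2, c) (q.1, q.2, c))
      = ∑ c : C, (Matrix.of fun (abc : A × B × C) (p : A × B) =>
          if abc = (p.1, p.2, c) then (1 : ℂ) else 0)ᴴ * M *
        (Matrix.of fun (abc : A × B × C) (p : A × B) =>
          if abc = (p.1, p.2, c) then (1 : ℂ) else 0) := by
    ext p q
    simp only [Matrix.sum_apply, Matrix.mul_apply, conjTranspose_apply, of_apply,
      apply_ite (star : ℂ → ℂ), star_one, star_zero, ite_mul, mul_ite, one_mul, mul_one, zero_mul,
      mul_zero, Finset.sum_ite_eq, Finset.sum_ite_eq', Finset.mem_univ, if_true]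
  rw [key]
  exact psd_sum _ _ fun c _ => hM.conjTranspose_mul_mul_same _

/-- Strong subadditivity of the min-entropy: if `λ·(id_A ⊗ σ_BC) − ρ_ABC` is PSD, then
`λ·(id_A ⊗ σ_B) − ρ_AB` is PSD, where `σ_B` and `ρ_AB` are partial traces over `C`. -/
theorem min_entropy_strong_subadditivity
    {A B C : Type*} [Fintype A] [Fintype B] [Fintype C]
    [DecidableEq A] [DecidableEq B] [DecidableEq C]
    [Nonempty A] [Nonempty B] [Nonempty C]
    (ρ : Matrix (A × B × C) (A × B × C) ℂ) (hρ : ρ.PosSemidef)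
    (σ : Matrix (B × C) (B × C) ℂ) (hσ : σ.PosSemidef)
    (l : ℝ) (hl : 0 ≤ l)
    (h : (l • ((1 : Matrix A A ℂ) ⊗ₖ σ) - ρ).PosSemidef) :
    (l • ((1 : Matrix A A ℂ) ⊗ₖ (Matrix.of fun b b' : B => ∑ c : C, σ (b, c) (b', c)))
      - Matrix.of (fun p q : A × B => ∑ c : C, ρ (p.1, p.2, c) (q.1, q.2, c))).PosSemidef := by
  have := ptrace_psd _ h
  convert this using 1
  ext ⟨a, b⟩ ⟨a', b'⟩
  simp only [Matrix.sub_apply, Matrix.smul_apply, of_apply, kroneckerMap_apply, one_apply,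
    Finset.sum_sub_distrib, smul_eq_mul]
  by_cases hA : a = a' <;>
    simp [hA, Finset.mul_sum, Finset.sum_sub_distrib]
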